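/- Let G be a topological group possessing a strict q-point and H a closed subgroup of G. Then there exist a metrizable space M and a continuous open and closed mapping f : G/H → M such that f⁻¹(y) is sequentially compact for every y ∈ M. -/

import Mathlib

open Filter Topology

open Pointwise Uniformity SetRel

theorem stmt13_aux {G : Type u} [Group G] [TopologicalSpace G] [IsTopologicalGroup G]
    (H : Subgroup G) (hH : IsClosed (H : Set G)) (V : ℕ → Set G)
    (hVo : ∀ n, IsOpen (V n)) (hV1 : ∀ n, (1 : G) ∈ V n)
    (hVsymm : ∀ n, (V n)⁻¹ = V n)
    (hVmul : ∀ n, V (n + 1) * V (n + 1) ⊆ V n)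
    (hVanti : Antitone V)
    (hcluster : ∀ v : ℕ → G, (∀ n, v n ∈ V n) → ∃ p : G, MapClusterPt p atTop v)
    (hseq : ∀ u : ℕ → G, (∀ k, u k ∈ ⋂ n, V n) →
      ∃ (p : G) (φ : ℕ → ℕ), StrictMono φ ∧ Tendsto (u ∘ φ) atTop (𝓝 p)) :
    ∃ (M : Type u) (_ : TopologicalSpace M) (_ : TopologicalSpace.MetrizableSpace M)
      (f : G ⧸ H → M), Continuous f ∧ IsOpenMap f ∧ IsClosedMap f ∧
        ∀ y : M, IsSeqCompact (f ⁻¹' {y}) := by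
  classical
  set N : Set G := ⋂ n, V n with hNdef
  have hNsub : ∀ n, N ⊆ V n := fun n => Set.iInter_subset V n
  have hinvV : ∀ n, ∀ {v : G}, v ∈ V n → v⁻¹ ∈ V n := by
    intro n v hv
    rw [← hVsymm n]; exact Set.inv_mem_inv.2 hv
  have hN1 : (1 : G) ∈ N := Set.mem_iInter.2 hV1
  have hNinv : ∀ {m : G}, m ∈ N → m⁻¹ ∈ N := fun hm =>
    Set.mem_iInter.2 fun n => hinvV n (hNsub n hm)
  have hNmul : ∀ {a b : G}, a ∈ N → b ∈ N → a * b ∈ N := fun ha hb =>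
    Set.mem_iInter.2 fun n =>
      hVmul n (Set.mul_mem_mul (hNsub (n + 1) ha) (hNsub (n + 1) hb))
  -- closure of any set is absorbed by V n * ·
  have hclosure : ∀ n (S : Set G), closure S ⊆ V n * S := by
    intro n S x hx
    have hmem : (fun v => v * x) '' V n ∈ 𝓝 x :=
      ((isOpenMap_mul_right x) (V n) (hVo n)).mem_nhds ⟨1, hV1 n, one_mul x⟩
    obtain ⟨y, hyI, hyS⟩ := mem_closure_iff_nhds.1 hx _ hmem
    obtain ⟨v, hv, hvx⟩ := hyI
    exact ⟨v⁻¹, hinvV n hv, y, hyS, by rw [← hvx]; exact inv_mul_cancel_left v x⟩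
  have hclV : ∀ n, closure (V (n + 1)) ⊆ V n := fun n =>
    (hclosure (n + 1) (V (n + 1))).trans (hVmul n)
  have hNclosed : IsClosed N := by
    refine isClosed_of_closure_subset fun x hx => Set.mem_iInter.2 fun n => ?_
    exact hclV n (closure_mono (hNsub (n + 1)) hx)
  -- cluster points of sequences going through the V n are in N
  have hclN : ∀ (v : ℕ → G), (∀ n, v n ∈ V n) → ∀ p : G, MapClusterPt p atTop v → p ∈ N := by
    intro v hv p hp
    refine Set.mem_iInter.2 fun m => hclV m ?_
    rw [mem_closure_iff_clusterPt]
    refine hp.clusterPt.mono (le_principal_iff.2 ?_)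
    refine mem_map.2 (mem_of_superset (Ici_mem_atTop (m + 1)) fun n hn => ?_)
    exact hVanti (Set.mem_Ici.1 hn) (hv n)
  -- key absorption lemma
  have hkey : ∀ C : Set G, IsClosed C → ∀ y : G, (∀ n, y ∈ V n * C) → y ∈ N * C := by
    intro C hC y hy
    choose v hv c hc hvc using fun n => Set.mem_mul.1 (hy n)
    obtain ⟨p, hp⟩ := hcluster v hv
    have hpN := hclN v hv p hp
    have hcont : Continuous fun g : G => g⁻¹ * y := continuous_inv.mul continuous_const
    have hcc : MapClusterPt (p⁻¹ * y) atTop ((fun g : G => g⁻¹ * y) ∘ v) :=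
      MapClusterPt.continuousAt_comp hcont.continuousAt hp
    have hcfun : ((fun g : G => g⁻¹ * y) ∘ v) = c := funext fun n => by
      rw [Function.comp_apply, ← hvc n, inv_mul_cancel_left]
    rw [hcfun] at hcc
    have hcy : p⁻¹ * y ∈ C := by
      have hcl : p⁻¹ * y ∈ closure C :=
        mem_closure_iff_clusterPt.2 (hcc.clusterPt.mono (le_principal_iff.2
          (mem_map.2 (Filter.univ_mem' hc))))
      exact hC.closure_subset hcl
    exact ⟨p, hpN, p⁻¹ * y, hcy, by group⟩
  have hNC : ∀ C : Set G, IsClosed C → IsClosed (N * C) := by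
    intro C hC
    refine isClosed_of_closure_subset fun y hy => hkey C hC y fun n => ?_
    have h1 : closure (N * C) ⊆ closure (V (n + 1) * C) :=
      closure_mono (Set.mul_subset_mul_right (hNsub (n + 1)))
    have h2 : closure (V (n + 1) * C) ⊆ V (n + 1) * (V (n + 1) * C) := hclosure (n + 1) _
    have h3 : V (n + 1) * (V (n + 1) * C) ⊆ V n * C := by
      rw [← mul_assoc]; exact Set.mul_subset_mul_right (hVmul n)
    exact h3 (h2 (h1 hy))
  -- the V n form a neighborhood basis of N
  have hbasisN : ∀ O : Set G, IsOpen O → N ⊆ O → ∃ n, V n ⊆ O := by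
    intro O hO hNO
    by_contra hcon
    push_neg at hcon
    choose v hv hvO using fun n => Set.not_subset.1 (hcon n)
    obtain ⟨p, hp⟩ := hcluster v hv
    have hpN := hclN v hv p hp
    obtain ⟨n, hn⟩ := (mapClusterPt_iff_frequently.1 hp O (hO.mem_nhds (hNO hpN))).exists
    exact hvO n hn
  -- the double coset equivalence relation
  set r : G → G → Prop := fun x y => ∃ m ∈ N, ∃ h ∈ H, y = m * x * h with hrdef
  have hrrefl : ∀ x, r x x := fun x => ⟨1, hN1, 1, H.one_mem, by group⟩
  have hrsymm : ∀ {x y}, r x y → r y x := by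
    rintro x y ⟨m, hm, h, hh, rfl⟩
    exact ⟨m⁻¹, hNinv hm, h⁻¹, H.inv_mem hh, by group⟩
  have hrtrans : ∀ {x y z}, r x y → r y z → r x z := by
    rintro x y z ⟨m, hm, h, hh, rfl⟩ ⟨m', hm', h', hh', rfl⟩
    exact ⟨m' * m, hNmul hm' hm, h * h', H.mul_mem hh hh', by group⟩
  set s : Setoid G := ⟨r, ⟨hrrefl, fun h => hrsymm h, fun h h' => hrtrans h h'⟩⟩ with hsdef
  set q : G → Quotient s := fun x => Quotient.mk s x with hqdef
  have hqeq : ∀ {x y : G}, r x y → q x = q y := fun h => Quotient.sound h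
  have hqexact : ∀ {x y : G}, q x = q y → r x y := fun h => Quotient.exact h
  have hqsurj : ∀ b : Quotient s, ∃ x, q x = b := fun b => Quotient.exists_rep b
  -- entourages
  set D : ℕ → Set (Quotient s × Quotient s) := fun n =>
    {ab | ∃ x y : G, q x = ab.1 ∧ q y = ab.2 ∧ ∃ v ∈ V n, ∃ h ∈ H, y = v * x * h} with hDdef
  have hDanti : Antitone D := by
    intro a b hab p hp
    obtain ⟨x, y, hx, hy, v, hv, h, hh, rfl⟩ := hp
    exact ⟨x, _, hx, hy, v, hVanti hab hv, h, hh, rfl⟩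
  have hDrefl : ∀ (n) (a : Quotient s), (a, a) ∈ D n := by
    intro n a
    obtain ⟨x, rfl⟩ := hqsurj a
    exact ⟨x, x, rfl, rfl, 1, hV1 n, 1, H.one_mem, by group⟩
  have hDsymm : ∀ (n) (p : Quotient s × Quotient s), p ∈ D n → (p.2, p.1) ∈ D n := by
    rintro n ⟨a, b⟩ ⟨x, y, hx, hy, v, hv, h, hh, rfl⟩
    exact ⟨v * x * h, x, hy, hx, v⁻¹, hinvV n hv, h⁻¹, H.inv_mem hh, by group⟩
  have hDcomp : ∀ n, D (n + 2) ○ D (n + 2) ⊆ D n := by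
    rintro n ⟨a, c⟩ ⟨b, ⟨x, y, hqx, hqy, v, hv, h, hh, rfl⟩,
      ⟨y', z, hqy', hqz, v', hv', h', hh', rfl⟩⟩
    obtain ⟨m, hm, k, hk, hy'⟩ := hrsymm (hqexact (hqy'.trans hqy.symm))
    refine ⟨x, _, hqx, hqz, v' * (m * v), ?_, h * (k * h'), H.mul_mem hh (H.mul_mem hk hh'),
      by rw [hy']; group⟩
    have h1 : m * v ∈ V (n + 1) := hVmul (n + 1) (Set.mul_mem_mul (hNsub (n + 2) hm) hv)
    exact hVmul n (Set.mul_mem_mul (hVanti (by omega : n + 1 ≤ n + 2) hv') h1)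
  -- the uniformity
  have hDdir : Directed (· ≥ ·) D := fun a b =>
    ⟨max a b, hDanti (le_max_left a b), hDanti (le_max_right a b)⟩
  have hB : (⨅ n, 𝓟 (D n)).HasBasis (fun _ : ℕ => True) D := hasBasis_iInf_principal hDdir
  have hDmem : ∀ n, D n ∈ ⨅ n, 𝓟 (D n) := fun n => hB.mem_of_mem trivial
  set core : UniformSpace.Core (Quotient s) := UniformSpace.Core.mk' (⨅ n, 𝓟 (D n))
    (by
      intro S hS a
      obtain ⟨n, -, hn⟩ := hB.mem_iff.1 hS
      exact hn (hDrefl n a))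
    (by
      intro S hS
      obtain ⟨n, -, hn⟩ := hB.mem_iff.1 hS
      exact mem_of_superset (hDmem n) fun p hp => hn (hDsymm n p hp))
    (by
      intro S hS
      obtain ⟨n, -, hn⟩ := hB.mem_iff.1 hS
      exact ⟨D (n + 2), hDmem (n + 2), (hDcomp n).trans hn⟩) with hcoredef
  letI U : UniformSpace (Quotient s) := UniformSpace.ofCore core
  letI tM : TopologicalSpace (Quotient s) := UniformSpace.toTopologicalSpace
  have huni : 𝓤 (Quotient s) = ⨅ n, 𝓟 (D n) := rfl
  have hUB : (𝓤 (Quotient s)).HasBasis (fun _ : ℕ => True) D := by rw [huni]; exact hB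
  have hnhds : ∀ a : Quotient s,
      (𝓝 a).HasBasis (fun _ : ℕ => True) (fun n => {b | (a, b) ∈ D n}) := fun a =>
    nhds_basis_uniformity' hUB
  haveI hcount : (𝓤 (Quotient s)).IsCountablyGenerated := hUB.isCountablyGenerated
  -- q is continuous
  have hq_cont : Continuous q := by
    refine continuous_iff_continuousAt.2 fun x => (hnhds (q x)).tendsto_right_iff.mpr ?_
    intro n _
    have hmem : (fun v => v * x) '' V n ∈ 𝓝 x :=
      ((isOpenMap_mul_right x) (V n) (hVo n)).mem_nhds ⟨1, hV1 n, one_mul x⟩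
    filter_upwards [hmem] with y hy
    obtain ⟨v, hv, hvx⟩ := hy
    exact ⟨x, y, rfl, rfl, v, hv, 1, H.one_mem, by rw [← hvx]; group⟩
  -- images of open saturated sets are open
  have hopen_img : ∀ T : Set G, IsOpen T → (∀ x ∈ T, ∀ y, r x y → y ∈ T) →
      IsOpen (q '' T) := by
    intro T hT hsat
    rw [isOpen_iff_mem_nhds]
    rintro a ⟨x₀, hx₀, rfl⟩
    rw [(hnhds (q x₀)).mem_iff]
    obtain ⟨n₀, hn₀⟩ := hbasisN {g | g * x₀ ∈ T} ((hT.preimage (continuous_mul_right x₀)))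
      (fun m hm => hsat x₀ hx₀ (m * x₀) ⟨m, hm, 1, H.one_mem, by group⟩)
    refine ⟨n₀ + 1, trivial, ?_⟩
    rintro b ⟨x', y, hqx', hqy, v, hv, h', hh', rfl⟩
    obtain ⟨m, hm, h, hh, hx'⟩ := hqexact hqx'
    have hvm : v * m⁻¹ ∈ V n₀ := hVmul n₀ (Set.mul_mem_mul hv (hNsub (n₀ + 1) (hNinv hm)))
    have hT' : v * m⁻¹ * x₀ ∈ T := hn₀ hvm
    have hyT : v * x' * h' ∈ T := by
      refine hsat _ hT' _ ⟨1, hN1, h⁻¹ * h', H.mul_mem (H.inv_mem hh) hh', ?_⟩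
      rw [hx']; group
    exact ⟨v * x' * h', hyT, hqy⟩
  -- images of closed right-H-stable sets are closed
  have hclosed_img : ∀ C : Set G, IsClosed C → (∀ c ∈ C, ∀ h ∈ H, c * h ∈ C) →
      IsClosed (q '' C) := by
    intro C hC hCH
    have hNCc : IsClosed (N * C) := hNC C hC
    have himg : q '' C = (q '' (N * C)ᶜ)ᶜ := by
      ext b
      simp only [Set.mem_compl_iff]
      constructor
      · rintro ⟨c, hc, rfl⟩ ⟨y, hy, hqy⟩
        obtain ⟨m, hm, h, hh, hceq⟩ := hqexact hqy
        refine hy ⟨m⁻¹, hNinv hm, c * h⁻¹, hCH c hc h⁻¹ (H.inv_mem hh), ?_⟩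
        rw [hceq]; group
      · intro hb
        obtain ⟨y, hy⟩ := hqsurj b
        have hyNC : y ∈ N * C := by
          by_contra hn
          exact hb ⟨y, hn, hy⟩
        obtain ⟨m, hm, c, hc, hmc⟩ := hyNC
        refine ⟨c, hc, ?_⟩
        rw [← hy, ← hmc]
        exact hqeq ⟨m, hm, 1, H.one_mem, by group⟩
    rw [himg]
    refine (hopen_img _ hNCc.isOpen_compl ?_).isClosed_compl
    rintro x hx y ⟨m, hm, h, hh, rfl⟩ ⟨m₂, hm₂, c, hc, hy2⟩
    refine hx ⟨m⁻¹ * m₂, hNmul (hNinv hm) hm₂, c * h⁻¹, hCH c hc h⁻¹ (H.inv_mem hh), ?_⟩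
    have hy2' : m₂ * c = m * x * h := hy2
    have hx2 : x = m⁻¹ * (m₂ * c) * h⁻¹ := by rw [hy2']; group
    rw [hx2]; group
  -- T1
  haveI : T1Space (Quotient s) := by
    refine ⟨fun a => ?_⟩
    obtain ⟨x, rfl⟩ := hqsurj a
    have hCc : IsClosed ((Homeomorph.mulLeft x) '' (H : Set G)) :=
      (Homeomorph.mulLeft x).isClosedMap _ hH
    have himg : ({q x} : Set (Quotient s)) = q '' ((Homeomorph.mulLeft x) '' (H : Set G)) := by
      ext b
      simp only [Set.mem_singleton_iff]
      constructor
      · rintro rfl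
        exact ⟨(Homeomorph.mulLeft x) 1, ⟨1, H.one_mem, rfl⟩, by simp⟩
      · rintro ⟨c, ⟨h, hh, rfl⟩, rfl⟩
        exact (hqeq ⟨1, hN1, h, hh, by simp [Homeomorph.mulLeft]⟩).symm
    rw [himg]
    refine hclosed_img _ hCc ?_
    rintro c ⟨h, hh, rfl⟩ h' hh'
    exact ⟨h * h', H.mul_mem hh hh', by simp [Homeomorph.mulLeft, mul_assoc]⟩
  haveI hmetr : TopologicalSpace.MetrizableSpace (Quotient s) := UniformSpace.metrizableSpace
  -- the map f
  set f : G ⧸ H → Quotient s := fun a =>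
    Quotient.liftOn' a q (fun x y hxy =>
      hqeq ⟨1, hN1, x⁻¹ * y, QuotientGroup.leftRel_apply.1 hxy, by group⟩) with hfdef
  have hfmk : ∀ x : G, f (QuotientGroup.mk x) = q x := fun x => rfl
  have hf_cont : Continuous f := by
    rw [(QuotientGroup.isQuotientMap_mk H).continuous_iff]
    exact hq_cont
  -- f is an open map
  have hf_open : IsOpenMap f := by
    intro O' hO'
    set O : Set G := QuotientGroup.mk ⁻¹' O' with hOdef
    have hOH : ∀ o ∈ O, ∀ h ∈ H, o * h ∈ O := by
      intro o ho h hh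
      show QuotientGroup.mk (o * h) ∈ O'
      rw [QuotientGroup.mk_mul_of_mem o hh]
      exact ho
    have himg : f '' O' = q '' (N * O) := by
      ext b
      constructor
      · rintro ⟨a, ha, rfl⟩
        obtain ⟨x, rfl⟩ := QuotientGroup.mk_surjective a
        exact ⟨x, ⟨1, hN1, x, ha, one_mul x⟩, rfl⟩
      · rintro ⟨y, ⟨m, hm, o, ho, rfl⟩, rfl⟩
        refine ⟨QuotientGroup.mk o, ho, ?_⟩
        rw [hfmk]
        exact hqeq ⟨m, hm, 1, H.one_mem, by group⟩
    rw [himg]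
    refine hopen_img _ ((hO'.preimage QuotientGroup.continuous_mk).mul_left) ?_
    rintro x ⟨m, hm, o, ho, rfl⟩ y ⟨m₁, hm₁, h, hh, rfl⟩
    exact ⟨m₁ * m, hNmul hm₁ hm, o * h, hOH o ho h hh, by group⟩
  -- f is a closed map
  have hf_closed : IsClosedMap f := by
    intro C' hC'
    set C : Set G := QuotientGroup.mk ⁻¹' C' with hCdef
    have hCH : ∀ c ∈ C, ∀ h ∈ H, c * h ∈ C := by
      intro c hc h hh
      show QuotientGroup.mk (c * h) ∈ C'
      rw [QuotientGroup.mk_mul_of_mem c hh]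
      exact hc
    have himg : f '' C' = q '' C := by
      ext b
      constructor
      · rintro ⟨a, ha, rfl⟩
        obtain ⟨x, rfl⟩ := QuotientGroup.mk_surjective a
        exact ⟨x, ha, rfl⟩
      · rintro ⟨y, hy, rfl⟩
        exact ⟨QuotientGroup.mk y, hy, rfl⟩
    rw [himg]
    exact hclosed_img C (hC'.preimage QuotientGroup.continuous_mk) hCH
  -- fibers are sequentially compact
  have hNseqc : ∀ w : ℕ → G, (∀ k, w k ∈ N) →
      ∃ p ∈ N, ∃ φ : ℕ → ℕ, StrictMono φ ∧ Tendsto (w ∘ φ) atTop (𝓝 p) := by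
    intro w hw
    obtain ⟨p, φ, hφ, hlim⟩ := hseq w hw
    have hpN : p ∈ N := hNclosed.mem_of_tendsto hlim
      (Filter.Eventually.of_forall fun k => hw (φ k))
    exact ⟨p, hpN, φ, hφ, hlim⟩
  have hfib : ∀ y : Quotient s, IsSeqCompact (f ⁻¹' {y}) := by
    intro b
    obtain ⟨x, rfl⟩ := hqsurj b
    intro u hu
    have hrep : ∀ k, ∃ m ∈ N, u k = QuotientGroup.mk (m * x) := by
      intro k
      obtain ⟨g, hg⟩ := QuotientGroup.mk_surjective (u k)
      have hfu : f (u k) = q x := hu k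
      rw [← hg, hfmk] at hfu
      obtain ⟨m, hm, h, hh, hgx⟩ := hrsymm (hqexact hfu)
      refine ⟨m, hm, ?_⟩
      rw [← hg, hgx]
      exact QuotientGroup.mk_mul_of_mem (m * x) hh
    choose m hm hmk using hrep
    obtain ⟨p, hp, φ, hφ, hlim⟩ := hNseqc m hm
    refine ⟨QuotientGroup.mk (p * x), ?_, φ, hφ, ?_⟩
    · rw [Set.mem_preimage, Set.mem_singleton_iff, hfmk]
      exact (hqeq ⟨p, hp, 1, H.one_mem, by group⟩).symm
    · have hcomp : u ∘ φ = (fun g => QuotientGroup.mk (g * x) : G → G ⧸ H) ∘ (m ∘ φ) :=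
        funext fun k => by
          simp only [Function.comp_apply]
          exact hmk (φ k)
      rw [hcomp]
      exact ((QuotientGroup.continuous_mk.comp (continuous_mul_right x)).tendsto p).comp hlim
  exact ⟨Quotient s, tM, hmetr, f, hf_cont, hf_open, hf_closed, hfib⟩

/-- if a topological group `G` has a strict q-point and `H` is a closed
subgroup, then `G/H` admits a continuous open closed map onto a metrizable space
with sequentially compact fibers. -/
theorem stmt_13 {G : Type u} [Group G] [TopologicalSpace G] [IsTopologicalGroup G] [T2Space G]
    (hq : ∃ (x : G) (U : ℕ → Set G), (∀ n, IsOpen (U n) ∧ x ∈ U n) ∧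
      (∀ u : ℕ → G, (∀ n, u n ∈ U n) → ∃ p : G, MapClusterPt p atTop u) ∧
      IsSeqCompact (⋂ n, U n))
    (H : Subgroup G) (hH : IsClosed (H : Set G)) :
    ∃ (M : Type u) (_ : TopologicalSpace M) (_ : TopologicalSpace.MetrizableSpace M)
      (f : G ⧸ H → M), Continuous f ∧ IsOpenMap f ∧ IsClosedMap f ∧
        ∀ y : M, IsSeqCompact (f ⁻¹' {y}) := by
  classical
  obtain ⟨x₀, U, hU, hUcl, hUseq⟩ := hq
  set W : ℕ → Set G := fun n => (fun g => x₀ * g) ⁻¹' U n with hWdef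
  have hWo : ∀ n, IsOpen (W n) := fun n => (hU n).1.preimage (continuous_mul_left x₀)
  have hW1 : ∀ n, (1 : G) ∈ W n := fun n => by
    show x₀ * 1 ∈ U n
    rw [mul_one]
    exact (hU n).2
  have hWmem : ∀ n, W n ∈ 𝓝 (1 : G) := fun n => (hWo n).mem_nhds (hW1 n)
  -- symmetric shrinking
  have step : ∀ S : Set G, S ∈ 𝓝 (1 : G) →
      ∃ B : Set G, IsOpen B ∧ (1 : G) ∈ B ∧ B⁻¹ = B ∧ B * B ⊆ S := by
    intro S hS
    obtain ⟨A, hAo, hA1, hAA⟩ := exists_open_nhds_one_mul_subset hS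
    refine ⟨A ∩ A⁻¹, hAo.inter hAo.inv, ⟨hA1, by simpa using hA1⟩, ?_, ?_⟩
    · rw [Set.inter_inv, _root_.inv_inv, Set.inter_comm]
    · exact (Set.mul_subset_mul Set.inter_subset_left Set.inter_subset_left).trans hAA
  choose Fb hFo hF1 hFsymm hFmul using step
  set F : Set G → Set G := fun S => if h : S ∈ 𝓝 (1 : G) then Fb S h else Set.univ with hFdef
  have hFspec : ∀ S (h : S ∈ 𝓝 (1 : G)), IsOpen (F S) ∧ (1 : G) ∈ F S ∧
      (F S)⁻¹ = F S ∧ F S * F S ⊆ S := by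
    intro S h
    have : F S = Fb S h := dif_pos h
    rw [this]
    exact ⟨hFo S h, hF1 S h, hFsymm S h, hFmul S h⟩
  set V : ℕ → Set G := fun n => Nat.rec (F (W 0)) (fun k Vk => F (Vk ∩ W (k + 1))) n with hVdef
  have hV0 : V 0 = F (W 0) := rfl
  have hVsucc : ∀ k, V (k + 1) = F (V k ∩ W (k + 1)) := fun k => rfl
  have hVP : ∀ n, IsOpen (V n) ∧ (1 : G) ∈ V n ∧ (V n)⁻¹ = V n ∧ V n ⊆ W n ∧ V n ∈ 𝓝 1 := by
    intro n
    induction n with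
    | zero =>
      obtain ⟨ho, h1, hs, hm⟩ := hFspec (W 0) (hWmem 0)
      rw [← hV0] at ho h1 hs hm
      have hsub : V 0 ⊆ W 0 := fun a ha => by
        have := hm (Set.mul_mem_mul ha h1)
        rwa [mul_one] at this
      exact ⟨ho, h1, hs, hsub, ho.mem_nhds h1⟩
    | succ k ih =>
      have hmem : V k ∩ W (k + 1) ∈ 𝓝 (1 : G) := Filter.inter_mem ih.2.2.2.2 (hWmem (k + 1))
      obtain ⟨ho, h1, hs, hm⟩ := hFspec _ hmem
      rw [← hVsucc k] at ho h1 hs hm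
      have hsub : V (k + 1) ⊆ W (k + 1) := fun a ha => by
        have := hm (Set.mul_mem_mul ha h1)
        rw [mul_one] at this
        exact this.2
      exact ⟨ho, h1, hs, hsub, ho.mem_nhds h1⟩
  have hVmul : ∀ n, V (n + 1) * V (n + 1) ⊆ V n := by
    intro n
    have hmem : V n ∩ W (n + 1) ∈ 𝓝 (1 : G) := Filter.inter_mem (hVP n).2.2.2.2 (hWmem (n + 1))
    have := (hFspec _ hmem).2.2.2
    rw [← hVsucc n] at this
    exact this.trans Set.inter_subset_left
  have hVanti : Antitone V := antitone_nat_of_succ_le fun n a ha => by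
    have := hVmul n (Set.mul_mem_mul ha (hVP (n + 1)).2.1)
    rwa [mul_one] at this
  have hcluster : ∀ v : ℕ → G, (∀ n, v n ∈ V n) → ∃ p : G, MapClusterPt p atTop v := by
    intro v hv
    obtain ⟨p, hp⟩ := hUcl (fun n => x₀ * v n) (fun n => (hVP n).2.2.2.1 (hv n))
    have hcont : Continuous fun g : G => x₀⁻¹ * g := continuous_mul_left x₀⁻¹
    have := MapClusterPt.continuousAt_comp hcont.continuousAt hp
    refine ⟨x₀⁻¹ * p, ?_⟩
    have hfun : ((fun g : G => x₀⁻¹ * g) ∘ fun n => x₀ * v n) = v :=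
      funext fun n => by simp [Function.comp]
    rwa [hfun] at this
  have hseq : ∀ u : ℕ → G, (∀ k, u k ∈ ⋂ n, V n) →
      ∃ (p : G) (φ : ℕ → ℕ), StrictMono φ ∧ Tendsto (u ∘ φ) atTop (𝓝 p) := by
    intro u hu
    have hmem : ∀ k, x₀ * u k ∈ ⋂ n, U n := fun k =>
      Set.mem_iInter.2 fun n => (hVP n).2.2.2.1 (Set.mem_iInter.1 (hu k) n)
    obtain ⟨p₀, -, φ, hφ, hlim⟩ := hUseq hmem
    refine ⟨x₀⁻¹ * p₀, φ, hφ, ?_⟩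
    have := ((continuous_mul_left x₀⁻¹).tendsto p₀).comp hlim
    have hfun : ((fun g : G => x₀⁻¹ * g) ∘ ((fun k => x₀ * u k) ∘ φ)) = u ∘ φ :=
      funext fun k => by simp [Function.comp]
    rwa [hfun] at this
  exact stmt13_aux H hH V (fun n => (hVP n).1) (fun n => (hVP n).2.1) (fun n => (hVP n).2.2.1)
    hVmul hVanti hcluster hseq
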